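/- Let (a_n) be a sequence in F with q-dual sequence (a*_n), and define the sequence (b_n) by b_0 = 0 and b_n = -q^{1-n} [n]_q a_{n-1} for n ≥ 1. Then the q-dual sequence (b*_n) of (b_n) satisfies b*_0 = 0 and b*_n = [n]_q a*_{n-1} for all n ≥ 1. -/

import Mathlib

open Finset

/-- The q-Pochhammer symbol `(a;q)_n = ∏_{j=0}^{n-1} (1 - a q^j)`. -/
def qPoch {F : Type*} [Field F] (q a : F) (n : ℕ) : F :=
  ∏ j ∈ Finset.range n, (1 - a * q ^ j)

/-- The q-binomial coefficient `[n choose i]_q`, equal to 0 when `i > n`. -/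
def qBinom {F : Type*} [Field F] (q : F) (n i : ℕ) : F :=
  if i ≤ n then qPoch q q n / (qPoch q q i * qPoch q q (n - i)) else 0

/-- The q-integer `[n]_q = (1-q^n)/(1-q)`. -/
def qInt {F : Type*} [Field F] (q : F) (n : ℕ) : F := (1 - q ^ n) / (1 - q)

/-- The q-dual sequence `a*_n = ∑_{i=0}^n (-1)^i [n choose i]_q q^{i(i-1)/2} a_i`. -/
def qDual {F : Type*} [Field F] (q : F) (a : ℕ → F) (n : ℕ) : F :=
  ∑ i ∈ Finset.range (n + 1), (-1 : F) ^ i * qBinom q n i * q ^ (i.choose 2) * a i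

lemma qPoch_ne_zero {F : Type*} [Field F] {q : F}
    (hq : ∀ m : ℕ, 0 < m → q ^ m ≠ 1) (n : ℕ) : qPoch q q n ≠ 0 := by
  refine Finset.prod_ne_zero_iff.mpr fun j _ h => ?_
  have h1 : q ^ (j + 1) = 1 := by rw [pow_succ]; linear_combination -h
  exact hq (j + 1) (Nat.succ_pos j) h1

lemma qPoch_succ {F : Type*} [Field F] (q : F) (n : ℕ) :
    qPoch q q (n + 1) = qPoch q q n * (1 - q ^ (n + 1)) := by
  rw [qPoch, Finset.prod_range_succ, ← qPoch, pow_succ]; ring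

lemma key {F : Type*} [Field F] (q : F)
    (hq : ∀ m : ℕ, 0 < m → q ^ m ≠ 1) (n j : ℕ) (hj : j ≤ n) :
    qBinom q (n + 1) (j + 1) * qInt q (j + 1) = qInt q (n + 1) * qBinom q n j := by
  have h1 : (1 : F) - q ≠ 0 := by
    intro h; exact hq 1 one_pos (by rw [pow_one]; linear_combination -h)
  have hj1 : j + 1 ≤ n + 1 := by omega
  have hsub : n + 1 - (j + 1) = n - j := by omega
  have hnj : (1 : F) - q ^ (j + 1) ≠ 0 := fun h => hq (j + 1) (Nat.succ_pos j) (by linear_combination -h)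
  rw [qBinom, qBinom, if_pos hj1, if_pos hj, hsub, qInt, qInt, qPoch_succ, qPoch_succ]
  have hPn := qPoch_ne_zero hq n
  have hPj := qPoch_ne_zero hq j
  have hPnj := qPoch_ne_zero hq (n - j)
  field_simp

theorem stmt12 {F : Type*} [Field F] (q : F) (hq0 : q ≠ 0)
    (hq : ∀ m : ℕ, 0 < m → q ^ m ≠ 1) (a b : ℕ → F) (hb0 : b 0 = 0)
    (hb : ∀ n : ℕ, 1 ≤ n → b n = -q ^ (1 - (n : ℤ)) * qInt q n * a (n - 1)) :
    qDual q b 0 = 0 ∧ ∀ n : ℕ, 1 ≤ n → qDual q b n = qInt q n * qDual q a (n - 1) := by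
  constructor
  · simp [qDual, hb0]
  · intro n hn
    obtain ⟨m, rfl⟩ : ∃ m, n = m + 1 := ⟨n - 1, by omega⟩
    rw [qDual, Finset.sum_range_succ']
    simp only [hb0, Nat.add_sub_cancel, mul_zero]
    rw [add_zero, qDual, Finset.mul_sum]
    refine Finset.sum_congr rfl fun i hi => ?_
    have hi' : i ≤ m := by simpa using Nat.lt_succ_iff.mp (Finset.mem_range.mp hi)
    rw [hb (i + 1) (Nat.le_add_left 1 i), Nat.add_sub_cancel]
    have hc : (i + 1).choose 2 = i + i.choose 2 := by
      rw [Nat.choose_succ_succ, Nat.choose_one_right]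
    have hz : (1 - ((i + 1 : ℕ) : ℤ)) = -(i : ℤ) := by push_cast; ring
    rw [hz, zpow_neg, zpow_natCast, hc, pow_add]
    have hk := key q hq m i hi'
    have hqi : (q : F) ^ i ≠ 0 := pow_ne_zero _ hq0
    field_simp
    linear_combination q ^ i * q ^ i.choose 2 * a i * hk
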